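/- arXiv:2302.04217 — 3 statements merged into one kernel-verified Lean document; each statement's English description precedes it below -/
import Mathlib

section
/- Let α > 0. For m ≥ n+1 with m+n odd, the ultraspherical differentiation matrix entry D_{m,n} = (1/2)·√(m!(2m+2α+1)(2n+2α+1)Γ(n+1+2α)/(n!Γ(m+1+2α))) satisfies D_{m,n} · m^{α-1/2} / n^{α+1/2} → 1 as m, n → ∞. -/
open Filter Real Finset Topology

lemma gamma_prod_aux (s : ℝ) (hs : 0 < s) (n : ℕ) :
    Real.Gamma (n + 1 + s) = Real.Gamma s * ∏ j ∈ Finset.range (n + 1), (s + j) := by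
  induction n with
  | zero =>
      rw [show ((0:ℕ):ℝ) + 1 + s = s + 1 by push_cast; ring, Real.Gamma_add_one hs.ne']
      simp [mul_comm]
  | succ n ih =>
      have hpos : (0:ℝ) < (n:ℝ) + 1 + s := by positivity
      rw [show ((n+1:ℕ):ℝ) + 1 + s = ((n:ℝ) + 1 + s) + 1 by push_cast; ring,
        Real.Gamma_add_one hpos.ne', Finset.prod_range_succ, ih]
      push_cast
      ring

lemma f_tendsto_aux (s : ℝ) (hs : 0 < s) :
    Tendsto (fun n : ℕ => (n.factorial : ℝ) * (n : ℝ) ^ s / Real.Gamma (n + 1 + s))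
      atTop (𝓝 1) := by
  have hG : Real.Gamma s ≠ 0 := (Real.Gamma_pos_of_pos hs).ne'
  have h := (Real.GammaSeq_tendsto_Gamma s).div_const (Real.Gamma s)
  rw [div_self hG] at h
  refine h.congr' ?_
  filter_upwards [eventually_gt_atTop 0] with n hn
  have hprod : (0:ℝ) < ∏ j ∈ Finset.range (n+1), (s + j) :=
    Finset.prod_pos fun j _ => by positivity
  rw [Real.GammaSeq, gamma_prod_aux s hs n]
  field_simp

lemma a_tendsto_aux (c : ℝ) :
    Tendsto (fun n : ℕ => (2 * (n:ℝ) + c) / (2 * n)) atTop (𝓝 1) := by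
  have h0 : Tendsto (fun n : ℕ => (c/2) / (n:ℝ)) atTop (𝓝 0) :=
    tendsto_const_div_atTop_nhds_zero_nat _
  have h1 : Tendsto (fun n : ℕ => 1 + (c/2) / (n:ℝ)) atTop (𝓝 1) := by
    simpa using tendsto_const_nhds.add h0
  refine h1.congr' ?_
  filter_upwards [eventually_gt_atTop 0] with n hn
  have hn0 : (n:ℝ) ≠ 0 := Nat.cast_ne_zero.mpr hn.ne'
  field_simp

lemma sqrt_sub_one_abs_le (x : ℝ) (hx : 0 ≤ x) : |Real.sqrt x - 1| ≤ |x - 1| := by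
  have h := Real.sq_sqrt hx
  have h2 := Real.sqrt_nonneg x
  rcases abs_cases (Real.sqrt x - 1) with ⟨h3,h4⟩|⟨h3,h4⟩ <;>
    rcases abs_cases (x-1) with ⟨h5,h6⟩|⟨h5,h6⟩ <;> nlinarith

theorem stmt9 (α : ℝ) (hα : 0 < α)
    (D : ℕ → ℕ → ℝ)
    (hD : ∀ m n : ℕ, n + 1 ≤ m → Odd (m + n) →
      D m n = (1 / 2) * Real.sqrt ((Nat.factorial m : ℝ) * (2 * m + 2 * α + 1) *
        (2 * n + 2 * α + 1) * Real.Gamma (n + 1 + 2 * α) /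
        ((Nat.factorial n : ℝ) * Real.Gamma (m + 1 + 2 * α)))) :
    ∀ ε > (0 : ℝ), ∃ M : ℕ, ∀ m n : ℕ, M ≤ n → n + 1 ≤ m → Odd (m + n) →
      |D m n * (m : ℝ) ^ (α - 1 / 2) / (n : ℝ) ^ (α + 1 / 2) - 1| < ε := by
  intro ε hε
  have hs0 : (0:ℝ) < 2*α := by positivity
  set F : ℕ → ℝ := fun k => (k.factorial : ℝ) * (k:ℝ)^(2*α) / Real.Gamma (k + 1 + 2*α)
    with hFdef
  set a : ℕ → ℝ := fun k => (2*(k:ℝ) + (2*α+1)) / (2*(k:ℝ)) with hadef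
  have hFt : Tendsto F atTop (𝓝 1) := f_tendsto_aux (2*α) hs0
  have hat : Tendsto a atTop (𝓝 1) := a_tendsto_aux (2*α+1)
  have hpt : Tendsto (fun k => F k * a k) atTop (𝓝 1) := by
    simpa using hFt.mul hat
  have hrt : Tendsto (fun k => a k / F k) atTop (𝓝 1) := by
    have := hat.div hFt one_ne_zero; rw [div_one] at this; exact this
  set δ : ℝ := min (ε/4) 1 with hδdef
  have hδ0 : 0 < δ := by positivity
  obtain ⟨M₁, h₁⟩ := (Metric.tendsto_atTop.mp hpt) δ hδ0
  obtain ⟨M₂, h₂⟩ := (Metric.tendsto_atTop.mp hrt) δ hδ0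
  refine ⟨max (max M₁ M₂) 1, fun m n hMn hmn _hodd => ?_⟩
  have hn1 : 1 ≤ n := le_trans (le_max_right _ _) hMn
  have hm1 : 1 ≤ m := le_trans hn1 (le_trans (Nat.le_succ n) hmn)
  have hn0 : (0:ℝ) < n := by exact_mod_cast hn1
  have hm0 : (0:ℝ) < m := by exact_mod_cast hm1
  have hnM1 : M₁ ≤ n := le_trans (le_max_left _ _) (le_trans (le_max_left _ _) hMn)
  have hmM1 : M₁ ≤ m := le_trans hnM1 (le_trans (Nat.le_succ n) hmn)
  have hnM2 : M₂ ≤ n := le_trans (le_max_right _ _) (le_trans (le_max_left _ _) hMn)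
  -- positivity facts
  have hΓm : (0:ℝ) < Real.Gamma (m + 1 + 2*α) := Real.Gamma_pos_of_pos (by positivity)
  have hΓn : (0:ℝ) < Real.Gamma (n + 1 + 2*α) := Real.Gamma_pos_of_pos (by positivity)
  have hfm : (0:ℝ) < (Nat.factorial m : ℝ) := by exact_mod_cast m.factorial_pos
  have hfn : (0:ℝ) < (Nat.factorial n : ℝ) := by exact_mod_cast n.factorial_pos
  have hms : (0:ℝ) < (m:ℝ)^(2*α) := Real.rpow_pos_of_pos hm0 _
  have hns : (0:ℝ) < (n:ℝ)^(2*α) := Real.rpow_pos_of_pos hn0 _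
  have hFm : 0 < F m := by rw [hFdef]; positivity
  have hFn : 0 < F n := by rw [hFdef]; positivity
  have ham : 0 < a m := by rw [hadef]; dsimp only; positivity
  have han : 0 < a n := by rw [hadef]; dsimp only; positivity
  set X : ℝ := (F m * a m) * (a n / F n) with hXdef
  have hX0 : 0 < X := by positivity
  -- |X - 1| ≤ 3δ
  have hb1 : |F m * a m - 1| < δ := by
    have := h₁ m hmM1; rwa [Real.dist_eq] at this
  have hb2 : |a n / F n - 1| < δ := by
    have := h₂ n hnM2; rwa [Real.dist_eq] at this
  have hδ1 : δ ≤ 1 := min_le_right _ _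
  have hδε : δ ≤ ε/4 := min_le_left _ _
  have hXclose : |X - 1| < ε := by
    have habs : |X - 1| ≤ |F m * a m| * |a n / F n - 1| + |F m * a m - 1| := by
      have : X - 1 = (F m * a m) * (a n / F n - 1) + (F m * a m - 1) := by ring
      rw [this]
      exact le_trans (abs_add_le _ _) (by rw [abs_mul])
    have hpm : |F m * a m| ≤ 2 := by
      have := abs_sub_abs_le_abs_sub (F m * a m) 1
      rw [abs_one] at this
      nlinarith [le_of_lt hb1, abs_nonneg (F m * a m - 1)]
    nlinarith [abs_nonneg (a n / F n - 1), abs_nonneg (F m * a m - 1)]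
  -- the expression equals √X
  have hkey : D m n * (m : ℝ) ^ (α - 1/2) / (n : ℝ) ^ (α + 1/2) = Real.sqrt X := by
    rw [hD m n hmn _hodd]
    set A : ℝ := (Nat.factorial m : ℝ) * (2 * m + 2 * α + 1) *
        (2 * n + 2 * α + 1) * Real.Gamma (n + 1 + 2 * α) /
        ((Nat.factorial n : ℝ) * Real.Gamma (m + 1 + 2 * α)) with hAdef
    set c : ℝ := (m:ℝ)^(α - 1/2) / (2 * (n:ℝ)^(α + 1/2)) with hcdef
    have hc0 : 0 ≤ c := by rw [hcdef]; positivity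
    have e1 : 1 / 2 * Real.sqrt A * (m:ℝ)^(α - 1/2) / (n:ℝ)^(α + 1/2)
        = Real.sqrt A * c := by rw [hcdef]; ring
    have hA0 : 0 ≤ A := by rw [hAdef]; positivity
    have e2 : Real.sqrt A * c = Real.sqrt (A * c^2) := by
      rw [Real.sqrt_mul hA0, Real.sqrt_sq hc0]
    rw [e1, e2]
    congr 1
    -- A * c^2 = X
    have hm2 : ((m:ℝ)^(α - 1/2))^2 = (m:ℝ)^(2*α) / (m:ℝ) := by
      rw [sq, ← Real.rpow_add hm0, show α - 1/2 + (α - 1/2) = 2*α - 1 by ring,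
        Real.rpow_sub hm0, Real.rpow_one]
    have hn2 : ((n:ℝ)^(α + 1/2))^2 = (n:ℝ)^(2*α) * (n:ℝ) := by
      rw [sq, ← Real.rpow_add hn0, show α + 1/2 + (α + 1/2) = 2*α + 1 by ring,
        Real.rpow_add hn0, Real.rpow_one]
    rw [hXdef, hAdef, hcdef, hFdef, hadef, div_pow, mul_pow, hm2, hn2]
    dsimp only
    field_simp
    ring
  rw [hkey]
  calc |Real.sqrt X - 1| ≤ |X - 1| := sqrt_sub_one_abs_le X hX0.le
    _ < ε := hXclose
end

section
/- For α > 0 and m ≥ 0, the integral o_m = ∫_{-1}^1 (1-x²)^{α-1} x P_{2m+1}^{(α,α)}(x) dx equals √π (m+1+α)_{m+1} Γ(α) / (2·4^m·Γ(α+m+3/2)). -/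
open Polynomial Set MeasureTheory intervalIntegral

noncomputable def stmtA (α : ℝ) (n : ℕ) : ℕ → Polynomial ℝ
  | 0 => 1
  | (k+1) => (1 - X^2) * derivative (stmtA α n k)
      - C (2*((n:ℝ) + α - k)) * (X * stmtA α n k)

lemma stmtA_natDegree_le (α : ℝ) (n k : ℕ) : (stmtA α n k).natDegree ≤ k := by
  induction k with
  | zero => simp [stmtA]
  | succ k ih =>
      rw [stmtA]
      refine le_trans (natDegree_sub_le _ _) ?_
      refine max_le ?_ ?_
      · cases k with
        | zero => simp [stmtA]
        | succ j =>
        have h1 : (1 - X^2 : Polynomial ℝ).natDegree ≤ 2 := by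
          refine le_trans (natDegree_sub_le _ _) ?_
          simp [natDegree_X_pow]
        have h2 : (derivative (stmtA α n (j+1))).natDegree ≤ j :=
          le_trans (natDegree_derivative_le _) (by omega)
        calc ((1 - X^2) * derivative (stmtA α n (j+1))).natDegree
            ≤ (1 - X^2 : Polynomial ℝ).natDegree + (derivative (stmtA α n (j+1))).natDegree :=
              natDegree_mul_le
          _ ≤ 2 + j := add_le_add h1 h2
          _ ≤ (j+1) + 1 := by omega
      · refine le_trans (natDegree_mul_le) ?_
        have h2 : (X * stmtA α n k).natDegree ≤ 1 + k := by
          refine le_trans (natDegree_mul_le) ?_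
          simp only [natDegree_X]
          omega
        simp only [natDegree_C]
        omega

lemma stmtA_coeff (α : ℝ) (n k : ℕ) :
    (stmtA α n k).coeff k = ∏ i ∈ Finset.range k, (-(2*(n:ℝ) + 2*α - i)) := by
  induction k with
  | zero => simp [stmtA]
  | succ k ih =>
      rw [stmtA, Finset.prod_range_succ, ← ih]
      have hd : (stmtA α n k).natDegree ≤ k := stmtA_natDegree_le α n k
      have e1 : ((1 - X^2) * derivative (stmtA α n k)).coeff (k+1)
          = -(k * (stmtA α n k).coeff k) := by
        rw [sub_mul, one_mul, coeff_sub]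
        have hde : (derivative (stmtA α n k)).coeff (k+1) = 0 := by
          refine coeff_eq_zero_of_natDegree_lt ?_
          exact lt_of_le_of_lt (natDegree_derivative_le _) (by omega)
        rw [hde]
        have : (X^2 * derivative (stmtA α n k)).coeff (k+1)
            = (derivative (stmtA α n k)).coeff (k-1) := by
          cases k with
          | zero => simp [stmtA]
          | succ j =>
              have : j + 1 + 1 = j + 2 := by ring
              rw [this, coeff_X_pow_mul]
              norm_num
        rw [this]
        cases k with
        | zero => simp [stmtA]
        | succ j =>
            rw [Nat.succ_sub_one, coeff_derivative]
            push_cast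
            ring
      have e2 : (C (2*((n:ℝ) + α - k)) * (X * stmtA α n k)).coeff (k+1)
          = 2*((n:ℝ) + α - k) * (stmtA α n k).coeff k := by
        rw [coeff_C_mul, coeff_X_mul]
      rw [coeff_sub, e1, e2]
      push_cast
      ring

lemma stmtA_eval_one (α : ℝ) (n k : ℕ) :
    (stmtA α n k).eval 1 = ∏ i ∈ Finset.range k, (-2*((n:ℝ) + α - i)) := by
  induction k with
  | zero => simp [stmtA]
  | succ k ih =>
      rw [stmtA, Finset.prod_range_succ, ← ih]
      simp only [eval_sub, eval_mul, eval_one, eval_pow, eval_X, eval_C]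
      ring

lemma contRpow (c : ℝ) (hc : 0 ≤ c) : Continuous (fun x : ℝ => (1 - x^2) ^ c) :=
  ((continuous_const.sub (continuous_pow 2)).rpow_const (fun _ => Or.inr hc))

lemma cont1m (c : ℝ) (hc : 0 ≤ c) : Continuous (fun x : ℝ => (1 - x) ^ c) :=
  ((continuous_const.sub continuous_id).rpow_const (fun _ => Or.inr hc))

lemma cont1p (c : ℝ) (hc : 0 ≤ c) : Continuous (fun x : ℝ => (1 + x) ^ c) :=
  ((continuous_const.add continuous_id).rpow_const (fun _ => Or.inr hc))

lemma intW (c : ℝ) (hc : 0 ≤ c) (q : Polynomial ℝ) :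
    IntervalIntegrable (fun x : ℝ => (1 - x^2) ^ c * q.eval x) volume (-1) 1 :=
  ((contRpow c hc).mul q.continuous).intervalIntegrable _ _

lemma intSing1 {α : ℝ} (hα : 0 < α) :
    IntervalIntegrable (fun x : ℝ => (1 - x) ^ (α - 1)) volume (-1) 1 := by
  have h := intervalIntegral.intervalIntegrable_rpow' (a := 0) (b := 2)
      (r := α - 1) (by linarith)
  have h2 := h.comp_sub_left 1
  norm_num at h2
  exact h2.symm

lemma intSing2 {α : ℝ} (hα : 0 < α) :
    IntervalIntegrable (fun x : ℝ => (1 + x) ^ (α - 1)) volume (-1) 1 := by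
  have h := intervalIntegral.intervalIntegrable_rpow' (a := 0) (b := 2)
      (r := α - 1) (by linarith)
  have h2 := h.comp_add_right 1
  norm_num at h2
  have : (fun x : ℝ => (1 + x) ^ (α - 1)) = (fun x : ℝ => (x + 1) ^ (α - 1)) := by
    funext x; rw [add_comm]
  rw [this]
  exact h2

lemma intH1 {α : ℝ} (hα : 0 < α) (c : ℝ) (hc : 0 ≤ c) (q : Polynomial ℝ) :
    IntervalIntegrable (fun x : ℝ => (1 - x) ^ (α - 1) * ((1 + x) ^ c * q.eval x))
      volume (-1) 1 :=
  (intSing1 hα).mul_continuousOn ((cont1p c hc).mul q.continuous).continuousOn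

lemma intH2 {α : ℝ} (hα : 0 < α) (c : ℝ) (hc : 0 ≤ c) (q : Polynomial ℝ) :
    IntervalIntegrable (fun x : ℝ => (1 + x) ^ (α - 1) * ((1 - x) ^ c * q.eval x))
      volume (-1) 1 :=
  (intSing2 hα).mul_continuousOn ((cont1m c hc).mul q.continuous).continuousOn

lemma ftc0 {f f' : ℝ → ℝ} (hcont : ContinuousOn f (Set.Icc (-1) 1))
    (hderiv : ∀ x ∈ Set.Ioo (-1:ℝ) 1, HasDerivAt f (f' x) x)
    (hint : IntervalIntegrable f' volume (-1) 1)
    (h1 : f 1 = 0) (h0 : f (-1) = 0) : ∫ x in (-1:ℝ)..1, f' x = 0 := by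
  rw [intervalIntegral.integral_eq_sub_of_hasDeriv_right_of_le (by norm_num) hcont
    (fun x hx => (hderiv x hx).hasDerivWithinAt) hint, h1, h0, sub_zero]

lemma hasDerivA (α : ℝ) (n k : ℕ) {x : ℝ} (hx : x ∈ Set.Ioo (-1:ℝ) 1) :
    HasDerivAt (fun y => (1 - y^2) ^ ((n:ℝ) + α - k) * (stmtA α n k).eval y)
      ((1 - x^2) ^ ((n:ℝ) + α - (k+1:ℕ)) * (stmtA α n (k+1)).eval x) x := by
  obtain ⟨hx1, hx2⟩ := hx
  have h1 : 0 < 1 - x^2 := by nlinarith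
  set c : ℝ := (n:ℝ) + α - k with hc
  have hbase : HasDerivAt (fun y : ℝ => 1 - y^2) (-(2*x)) x := by
    simpa using (hasDerivAt_pow 2 x).const_sub 1
  have hrpow : HasDerivAt (fun y : ℝ => (1 - y^2) ^ c)
      (c * (1 - x^2) ^ (c - 1) * (-(2*x))) x := by
    have := (Real.hasDerivAt_rpow_const (x := 1 - x^2) (p := c) (Or.inl h1.ne')).comp x hbase
    simpa [Function.comp_def] using this
  have := hrpow.mul ((stmtA α n k).hasDerivAt x)
  refine this.congr_deriv ?_
  have hsplit : (1 - x^2) ^ c = (1 - x^2) ^ (c - 1) * (1 - x^2) := by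
    rw [Real.rpow_sub_one h1.ne']
    field_simp
  have hexp : (n:ℝ) + α - (k+1:ℕ) = c - 1 := by push_cast [hc]; ring
  rw [hexp, stmtA]
  simp only [eval_sub, eval_mul, eval_one, eval_pow, eval_X, eval_C, hsplit]
  ring

lemma chainA {α : ℝ} (hα : 0 < α) (n : ℕ) : ∀ k, k ≤ n → ∀ p : Polynomial ℝ,
    (∫ x in (-1:ℝ)..1, (1 - x^2) ^ ((n:ℝ) + α - k) * ((stmtA α n k).eval x * p.eval x))
    = (-1:ℝ)^k * ∫ x in (-1:ℝ)..1, (1 - x^2) ^ ((n:ℝ) + α) * (derivative^[k] p).eval x := by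
  intro k
  induction k with
  | zero =>
      intro _ p
      simp [stmtA]
  | succ k ih =>
      intro hk p
      have hkn : k ≤ n := by omega
      have hek : (0:ℝ) ≤ (n:ℝ) + α - k := by
        have : (k:ℝ) ≤ n := by exact_mod_cast hkn
        linarith
      have hek1 : (0:ℝ) ≤ (n:ℝ) + α - (k+1:ℕ) := by
        have : ((k+1:ℕ):ℝ) ≤ n := by exact_mod_cast hk
        linarith
      have hekpos : (0:ℝ) < (n:ℝ) + α - k := by
        have : (k:ℝ) ≤ n := by exact_mod_cast hkn
        linarith
      have i1 : IntervalIntegrable (fun x : ℝ =>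
          (1 - x^2) ^ ((n:ℝ) + α - (k+1:ℕ)) * ((stmtA α n (k+1)).eval x * p.eval x))
          volume (-1) 1 := by
        have h := intW ((n:ℝ) + α - (k+1:ℕ)) hek1 (stmtA α n (k+1) * p)
        simpa only [eval_mul, mul_assoc] using h
      have i2 : IntervalIntegrable (fun x : ℝ =>
          (1 - x^2) ^ ((n:ℝ) + α - k) * ((stmtA α n k).eval x * (derivative p).eval x))
          volume (-1) 1 := by
        have h := intW ((n:ℝ) + α - k) hek (stmtA α n k * derivative p)
        simpa only [eval_mul, mul_assoc] using h
      have key : (∫ x in (-1:ℝ)..1,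
          ((1 - x^2) ^ ((n:ℝ) + α - (k+1:ℕ)) * ((stmtA α n (k+1)).eval x * p.eval x)
          + (1 - x^2) ^ ((n:ℝ) + α - k) * ((stmtA α n k).eval x * (derivative p).eval x))) = 0 := by
        apply ftc0 (f := fun y => (1 - y^2) ^ ((n:ℝ) + α - (k:ℕ)) *
          ((stmtA α n k).eval y * p.eval y))
        · have := ((contRpow _ hek).mul (stmtA α n k * p).continuous).continuousOn
            (s := Set.Icc (-1:ℝ) 1)
          simpa only [eval_mul, mul_assoc, Pi.mul_def] using this
        · intro x hx
          have h := (hasDerivA α n k hx).mul (p.hasDerivAt x)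
          have hf : (fun y => (1 - y^2) ^ ((n:ℝ) + α - (k:ℕ)) *
              ((stmtA α n k).eval y * p.eval y))
              = fun y => ((1 - y^2) ^ ((n:ℝ) + α - (k:ℕ)) * (stmtA α n k).eval y) * p.eval y := by
            funext y; ring
          rw [hf]
          refine h.congr_deriv ?_
          ring
        · exact i1.add i2
        · have : (1:ℝ) - 1^2 = 0 := by norm_num
          rw [this, Real.zero_rpow hekpos.ne', zero_mul]
        · have : (1:ℝ) - (-1:ℝ)^2 = 0 := by norm_num
          rw [this, Real.zero_rpow hekpos.ne', zero_mul]
      rw [intervalIntegral.integral_add i1 i2, ih hkn (derivative p)] at key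
      rw [Function.iterate_succ_apply]
      have : ((-1:ℝ)^(k+1)) = -((-1:ℝ)^k) := by ring
      rw [this]
      linarith [key]

lemma orthA {α : ℝ} (hα : 0 < α) (n : ℕ) (p : Polynomial ℝ) (hp : p.natDegree < n) :
    (∫ x in (-1:ℝ)..1, (1 - x^2) ^ α * ((stmtA α n n).eval x * p.eval x)) = 0 := by
  have h := chainA hα n n le_rfl p
  rw [Polynomial.iterate_derivative_eq_zero hp] at h
  have he : (n:ℝ) + α - (n:ℕ) = α := by ring
  rw [he] at h
  simpa using h

lemma sqZero {α : ℝ} (hα : 0 < α) (S : Polynomial ℝ)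
    (h : (∫ x in (-1:ℝ)..1, (1 - x^2) ^ α * (S.eval x * S.eval x)) = 0) : S = 0 := by
  by_contra hS
  set F : ℝ → ℝ := fun x => (1 - x^2) ^ α * (S.eval x * S.eval x) with hF
  have hFc : Continuous F := (contRpow α hα.le).mul (S.continuous.mul S.continuous)
  rw [intervalIntegral.integral_of_le (by norm_num : (-1:ℝ) ≤ 1)] at h
  have hnonneg : 0 ≤ᵐ[volume.restrict (Ioc (-1:ℝ) 1)] F := by
    refine (ae_restrict_iff' measurableSet_Ioc).2 (Filter.Eventually.of_forall ?_)
    intro x hx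
    have h1 : (0:ℝ) ≤ 1 - x^2 := by
      obtain ⟨ha, hb⟩ := hx
      nlinarith
    show (0:ℝ) ≤ F x
    exact mul_nonneg (Real.rpow_nonneg h1 α) (mul_self_nonneg _)
  have hInt : Integrable F (volume.restrict (Ioc (-1:ℝ) 1)) :=
    hFc.integrableOn_Ioc
  have hae : F =ᵐ[volume.restrict (Ioc (-1:ℝ) 1)] 0 :=
    (MeasureTheory.integral_eq_zero_iff_of_nonneg_ae hnonneg hInt).1 h
  have hnull : volume ({x | F x ≠ 0} ∩ Ioc (-1:ℝ) 1) = 0 := by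
    have hae' : ∀ᵐ x ∂(volume.restrict (Ioc (-1:ℝ) 1)), F x = 0 := by
      simpa [Filter.EventuallyEq] using hae
    have h2 := (MeasureTheory.ae_restrict_iff' measurableSet_Ioc).1 hae'
    rw [MeasureTheory.ae_iff] at h2
    convert h2 using 2
    ext x
    simp only [Set.mem_inter_iff, Set.mem_setOf_eq]
    tauto
  have hroots : Set.Finite {x : ℝ | S.IsRoot x} := Polynomial.finite_setOf_isRoot hS
  have hsub : Ioo (-1:ℝ) 1 ⊆ ({x | F x ≠ 0} ∩ Ioc (-1:ℝ) 1) ∪ {x : ℝ | S.IsRoot x} := by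
    intro x hx
    by_cases hr : S.eval x = 0
    · exact Or.inr hr
    · left
      constructor
      · have h1 : (0:ℝ) < 1 - x^2 := by
          obtain ⟨ha, hb⟩ := hx
          nlinarith
        have h2 : (0:ℝ) < (1 - x^2) ^ α := Real.rpow_pos_of_pos h1 α
        simp only [hF, Set.mem_setOf_eq]
        positivity
      · exact ⟨hx.1, hx.2.le⟩
  have : volume (Ioo (-1:ℝ) 1) = 0 := by
    refine le_antisymm ?_ (zero_le)
    calc volume (Ioo (-1:ℝ) 1)
        ≤ volume (({x | F x ≠ 0} ∩ Ioc (-1:ℝ) 1) ∪ {x : ℝ | S.IsRoot x}) :=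
          measure_mono hsub
      _ ≤ volume ({x | F x ≠ 0} ∩ Ioc (-1:ℝ) 1) + volume {x : ℝ | S.IsRoot x} :=
          measure_union_le _ _
      _ = 0 := by rw [hnull, hroots.measure_zero]; simp
  rw [Real.volume_Ioo] at this
  norm_num at this

noncomputable def stmtH (α : ℝ) (n k : ℕ) : ℝ → ℝ := fun x =>
  (Nat.factorial k : ℝ)/2 *
    ((1-x)^(α-1) * (1+x)^(α+(k:ℝ)) - (-1:ℝ)^k * ((1+x)^(α-1) * (1-x)^(α+(k:ℝ)))) *
    (stmtA α n (n-k)).eval x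

lemma rpshift {t : ℝ} (ht : 0 < t) (c : ℝ) (j : ℕ) : t ^ (c + (j:ℝ)) = t ^ c * t ^ j := by
  rw [Real.rpow_add ht, Real.rpow_natCast]

lemma intHlem {α : ℝ} (hα : 0 < α) (n j : ℕ) :
    IntervalIntegrable (stmtH α n j) volume (-1) 1 := by
  have hc : (0:ℝ) ≤ α + (j:ℝ) := by positivity
  have hfun : stmtH α n j = fun x =>
      ((Nat.factorial j : ℝ)/2) * ((1-x)^(α-1) * ((1+x)^(α+(j:ℝ)) * (stmtA α n (n-j)).eval x))
      - ((-1:ℝ)^j * (Nat.factorial j : ℝ)/2) *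
          ((1+x)^(α-1) * ((1-x)^(α+(j:ℝ)) * (stmtA α n (n-j)).eval x)) := by
    funext x; simp only [stmtH]; ring
  rw [hfun]
  exact ((intH1 hα _ hc _).const_mul _).sub ((intH2 hα _ hc _).const_mul _)

lemma hasDerivF {α : ℝ} (hα : 0 < α) (n k : ℕ) (hk : k < n) {x : ℝ}
    (hx : x ∈ Set.Ioo (-1:ℝ) 1) :
    HasDerivAt (fun y => (Nat.factorial k : ℝ)/2 *
      ((1-y)^α * (1+y)^(α+(k:ℝ)+1) - (-1:ℝ)^k * ((1+y)^α * (1-y)^(α+(k:ℝ)+1))) *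
      (stmtA α n (n-k-1)).eval y)
      (stmtH α n (k+1) x + stmtH α n k x) x := by
  obtain ⟨hx1, hx2⟩ := hx
  have hp : (0:ℝ) < 1 - x := by linarith
  have hq : (0:ℝ) < 1 + x := by linarith
  have hm : HasDerivAt (fun y : ℝ => 1 - y) (-1) x := by
    simpa using (hasDerivAt_id x).const_sub 1
  have hpl : HasDerivAt (fun y : ℝ => 1 + y) 1 x := by
    simpa using (hasDerivAt_id x).const_add 1
  have hu1 : HasDerivAt (fun y : ℝ => (1-y)^α) (α * (1-x)^(α-1) * (-1)) x :=
    (Real.hasDerivAt_rpow_const (p := α) (Or.inl hp.ne')).comp x hm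
  have hv1 : HasDerivAt (fun y : ℝ => (1+y)^(α+(k:ℝ)+1)) ((α+(k:ℝ)+1) * (1+x)^(α+(k:ℝ)+1-1) * 1) x :=
    (Real.hasDerivAt_rpow_const (p := α+(k:ℝ)+1) (Or.inl hq.ne')).comp x hpl
  have hu2 : HasDerivAt (fun y : ℝ => (1+y)^α) (α * (1+x)^(α-1) * 1) x :=
    (Real.hasDerivAt_rpow_const (p := α) (Or.inl hq.ne')).comp x hpl
  have hv2 : HasDerivAt (fun y : ℝ => (1-y)^(α+(k:ℝ)+1)) ((α+(k:ℝ)+1) * (1-x)^(α+(k:ℝ)+1-1) * (-1)) x :=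
    (Real.hasDerivAt_rpow_const (p := α+(k:ℝ)+1) (Or.inl hp.ne')).comp x hm
  have he : HasDerivAt (fun y : ℝ => (stmtA α n (n-k-1)).eval y)
      ((derivative (stmtA α n (n-k-1))).eval x) x := (stmtA α n (n-k-1)).hasDerivAt x
  have hmain := ((((hu1.mul hv1).sub ((hu2.mul hv2).const_mul ((-1:ℝ)^k))).const_mul
      ((Nat.factorial k : ℝ)/2)).mul he)
  refine hmain.congr_deriv ?_
  -- now prove the value identity
  obtain ⟨j, hj⟩ : ∃ j, n - k - 1 = j := ⟨n - k - 1, rfl⟩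
  have hcast : ((j : ℕ):ℝ) = (n:ℝ) - (k:ℝ) - 1 := by
    rw [← hj, show n - k - 1 = n - (k+1) by omega, Nat.cast_sub hk]
    push_cast; ring
  have e1 : (1-x)^α = (1-x)^(α-1) * (1-x)^(1:ℕ) := by
    have := rpshift hp (α-1) 1
    rw [show (α-1)+((1:ℕ):ℝ) = α by push_cast; ring] at this
    exact this
  have e2 : (1-x)^(α+(k:ℝ)) = (1-x)^(α-1) * (1-x)^(k+1) := by
    have := rpshift hp (α-1) (k+1)
    rw [show (α-1)+((k+1:ℕ):ℝ) = α+(k:ℝ) by push_cast; ring] at this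
    exact this
  have e3 : (1-x)^(α+(k:ℝ)+1) = (1-x)^(α-1) * (1-x)^(k+2) := by
    have := rpshift hp (α-1) (k+2)
    rw [show (α-1)+((k+2:ℕ):ℝ) = α+(k:ℝ)+1 by push_cast; ring] at this
    exact this
  have e4 : (1-x)^(α+(k:ℝ)+1-1) = (1-x)^(α-1) * (1-x)^(k+1) := by
    have := rpshift hp (α-1) (k+1)
    rw [show (α-1)+((k+1:ℕ):ℝ) = α+(k:ℝ)+1-1 by push_cast; ring] at this
    exact this
  have f1 : (1+x)^α = (1+x)^(α-1) * (1+x)^(1:ℕ) := by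
    have := rpshift hq (α-1) 1
    rw [show (α-1)+((1:ℕ):ℝ) = α by push_cast; ring] at this
    exact this
  have f2 : (1+x)^(α+(k:ℝ)) = (1+x)^(α-1) * (1+x)^(k+1) := by
    have := rpshift hq (α-1) (k+1)
    rw [show (α-1)+((k+1:ℕ):ℝ) = α+(k:ℝ) by push_cast; ring] at this
    exact this
  have f3 : (1+x)^(α+(k:ℝ)+1) = (1+x)^(α-1) * (1+x)^(k+2) := by
    have := rpshift hq (α-1) (k+2)
    rw [show (α-1)+((k+2:ℕ):ℝ) = α+(k:ℝ)+1 by push_cast; ring] at this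
    exact this
  have f4 : (1+x)^(α+(k:ℝ)+1-1) = (1+x)^(α-1) * (1+x)^(k+1) := by
    have := rpshift hq (α-1) (k+1)
    rw [show (α-1)+((k+1:ℕ):ℝ) = α+(k:ℝ)+1-1 by push_cast; ring] at this
    exact this
  simp only [stmtH]
  rw [hj, show n - (k+1) = j by omega, show n - k = j + 1 by omega]
  rw [show α + ((k+1:ℕ):ℝ) = α+(k:ℝ)+1 by push_cast; ring]
  rw [show ((Nat.factorial (k+1) : ℕ):ℝ) = ((k:ℝ)+1)*(Nat.factorial k : ℝ) by
    rw [Nat.factorial_succ]; push_cast; ring]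
  simp only [stmtA, eval_sub, eval_mul, eval_one, eval_pow,
    eval_X, eval_C, hcast, e1, e2, e3, e4, f1, f2, f3, f4, Pi.mul_apply, Pi.sub_apply]
  push_cast
  ring

lemma chainH {α : ℝ} (hα : 0 < α) (n k : ℕ) (hk : k < n) :
    (∫ x in (-1:ℝ)..1, stmtH α n (k+1) x) = - ∫ x in (-1:ℝ)..1, stmtH α n k x := by
  have hc1 : (0:ℝ) ≤ α + (k:ℝ) + 1 := by positivity
  have key : (∫ x in (-1:ℝ)..1, (stmtH α n (k+1) x + stmtH α n k x)) = 0 := by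
    apply ftc0 (f := fun y => (Nat.factorial k : ℝ)/2 *
      ((1-y)^α * (1+y)^(α+(k:ℝ)+1) - (-1:ℝ)^k * ((1+y)^α * (1-y)^(α+(k:ℝ)+1))) *
      (stmtA α n (n-k-1)).eval y)
    · refine Continuous.continuousOn ?_
      exact ((continuous_const.mul (((cont1m α hα.le).mul (cont1p _ hc1)).sub
        (continuous_const.mul ((cont1p α hα.le).mul (cont1m _ hc1))))).mul
        (stmtA α n (n-k-1)).continuous)
    · intro x hx
      exact hasDerivF hα n k hk hx
    · exact (intHlem hα n (k+1)).add (intHlem hα n k)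
    · have hz : (0:ℝ)^α = 0 := Real.zero_rpow hα.ne'
      have hz2 : (0:ℝ)^(α+(k:ℝ)+1) = 0 := Real.zero_rpow (by positivity)
      norm_num [hz, hz2]
    · have hz : (0:ℝ)^α = 0 := Real.zero_rpow hα.ne'
      have hz2 : (0:ℝ)^(α+(k:ℝ)+1) = 0 := Real.zero_rpow (by positivity)
      norm_num [hz, hz2]
  rw [intervalIntegral.integral_add (intHlem hα n (k+1)) (intHlem hα n k)] at key
  linarith

lemma chainH' {α : ℝ} (hα : 0 < α) (n : ℕ) : ∀ k, k ≤ n →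
    (∫ x in (-1:ℝ)..1, stmtH α n k x)
      = (-1:ℝ)^k * ∫ x in (-1:ℝ)..1, stmtH α n 0 x := by
  intro k
  induction k with
  | zero => intro _; simp
  | succ k ih =>
      intro hk
      rw [chainH hα n k (by omega), ih (by omega)]
      ring

lemma intCongrAe {a b : ℝ} (hab : a < b) {f g : ℝ → ℝ}
    (h : ∀ x ∈ Set.Ioo a b, f x = g x) :
    (∫ x in a..b, f x) = ∫ x in a..b, g x := by
  apply intervalIntegral.integral_congr_ae
  have hne : ∀ᵐ (x:ℝ), x ≠ b := by
    rw [MeasureTheory.ae_iff]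
    have : {x : ℝ | ¬ x ≠ b} = {b} := by ext x; simp
    rw [this]
    exact Real.volume_singleton
  filter_upwards [hne] with x hx1 hx2
  rw [Set.uIoc_of_le hab.le] at hx2
  exact h x ⟨hx2.1, lt_of_le_of_ne hx2.2 hx1⟩

lemma idH0 {α : ℝ} (hα : 0 < α) (n : ℕ) :
    (∫ x in (-1:ℝ)..1, (1-x^2)^(α-1) * x * (stmtA α n n).eval x)
      = ∫ x in (-1:ℝ)..1, stmtH α n 0 x := by
  apply intCongrAe (by norm_num)
  intro x hx
  obtain ⟨hx1, hx2⟩ := hx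
  have hp : (0:ℝ) < 1 - x := by linarith
  have hq : (0:ℝ) < 1 + x := by linarith
  have hm : (1:ℝ) - x^2 = (1-x)*(1+x) := by ring
  have e1 : ((1-x)*(1+x))^(α-1) = (1-x)^(α-1) * (1+x)^(α-1) :=
    Real.mul_rpow hp.le hq.le
  have e2 : (1+x)^α = (1+x)^(α-1)*(1+x) := by
    have := rpshift hq (α-1) 1
    rw [show (α-1)+((1:ℕ):ℝ) = α by push_cast; ring] at this
    simpa using this
  have e3 : (1-x)^α = (1-x)^(α-1)*(1-x) := by
    have := rpshift hp (α-1) 1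
    rw [show (α-1)+((1:ℕ):ℝ) = α by push_cast; ring] at this
    simpa using this
  simp only [stmtH, Nat.sub_zero, Nat.factorial_zero, Nat.cast_zero, add_zero, pow_zero,
    Nat.cast_one, hm, e1, e2, e3]
  ring

lemma idHn {α : ℝ} (hα : 0 < α) (n : ℕ) (hodd : Odd n) :
    (∫ x in (-1:ℝ)..1, stmtH α n n x)
      = (Nat.factorial n : ℝ) *
          ∫ x in (-1:ℝ)..1, (1-x)^(α-1) * (1+x)^(α+(n:ℝ)) := by
  have hc : (0:ℝ) ≤ α + (n:ℝ) := by positivity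
  have i1 : IntervalIntegrable (fun x : ℝ => (1-x)^(α-1) * (1+x)^(α+(n:ℝ))) volume (-1) 1 :=
    (intSing1 hα).mul_continuousOn (cont1p _ hc).continuousOn
  have i2 : IntervalIntegrable (fun x : ℝ => (1+x)^(α-1) * (1-x)^(α+(n:ℝ))) volume (-1) 1 :=
    (intSing2 hα).mul_continuousOn (cont1m _ hc).continuousOn
  have hfun : stmtH α n n = fun x =>
      ((Nat.factorial n : ℝ)/2) * ((1-x)^(α-1) * (1+x)^(α+(n:ℝ)))
      - ((-1:ℝ)^n * (Nat.factorial n : ℝ)/2) * ((1+x)^(α-1) * (1-x)^(α+(n:ℝ))) := by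
    funext x
    simp only [stmtH, Nat.sub_self, stmtA, eval_one]
    ring
  rw [hfun]
  rw [intervalIntegral.integral_sub (i1.const_mul _) (i2.const_mul _),
    intervalIntegral.integral_const_mul, intervalIntegral.integral_const_mul]
  have hmirror : (∫ x in (-1:ℝ)..1, (1+x)^(α-1) * (1-x)^(α+(n:ℝ)))
      = ∫ x in (-1:ℝ)..1, (1-x)^(α-1) * (1+x)^(α+(n:ℝ)) := by
    have := intervalIntegral.integral_comp_neg (a := (-1:ℝ)) (b := 1)
      (fun x => (1-x)^(α-1) * (1+x)^(α+(n:ℝ)))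
    norm_num at this
    rw [← this]
    apply intCongrAe (by norm_num)
    intro x hx
    rw [show (1:ℝ) + -x = 1 - x by ring]
  rw [hmirror]
  have hsgn : (-1:ℝ)^n = -1 := Odd.neg_one_pow hodd
  rw [hsgn]
  ring

lemma Bval {α : ℝ} (hα : 0 < α) (n : ℕ) :
    (∫ t in (0:ℝ)..1, t^(α+(n:ℝ)) * (1-t)^(α-1))
      = Real.Gamma (α+(n:ℝ)+1) * Real.Gamma α / Real.Gamma (2*α+(n:ℝ)+1) := by
  set B : ℝ := ∫ t in (0:ℝ)..1, t^(α+(n:ℝ)) * (1-t)^(α-1) with hB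
  have hbeta : Complex.betaIntegral ((α+(n:ℝ)+1 : ℝ):ℂ) ((α : ℝ):ℂ) = (B:ℂ) := by
    rw [Complex.betaIntegral, hB]
    rw [← intervalIntegral.integral_ofReal]
    apply intervalIntegral.integral_congr
    intro x hx
    rw [Set.uIcc_of_le (by norm_num : (0:ℝ) ≤ 1)] at hx
    obtain ⟨hx0, hx1⟩ := hx
    have h1x : (0:ℝ) ≤ 1 - x := by linarith
    have e1 : ((α+(n:ℝ)+1 : ℝ):ℂ) - 1 = ((α+(n:ℝ) : ℝ):ℂ) := by push_cast; ring
    have e2 : ((α : ℝ):ℂ) - 1 = ((α - 1 : ℝ):ℂ) := by push_cast; ring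
    show (x:ℂ) ^ (((α+(n:ℝ)+1 : ℝ):ℂ) - 1) * (1 - (x:ℂ)) ^ (((α : ℝ):ℂ) - 1)
        = ((x ^ (α+(n:ℝ)) * (1-x) ^ (α-1) : ℝ) : ℂ)
    rw [e1, e2, ← Complex.ofReal_one, ← Complex.ofReal_sub,
      ← Complex.ofReal_cpow hx0, ← Complex.ofReal_cpow h1x, ← Complex.ofReal_mul]
  have hre1 : (0:ℝ) < ((α+(n:ℝ)+1 : ℝ):ℂ).re := by
    rw [Complex.ofReal_re]; positivity
  have hre2 : (0:ℝ) < ((α : ℝ):ℂ).re := by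
    rw [Complex.ofReal_re]; exact hα
  have key := Complex.Gamma_mul_Gamma_eq_betaIntegral hre1 hre2
  rw [hbeta] at key
  have hadd : ((α+(n:ℝ)+1 : ℝ):ℂ) + ((α : ℝ):ℂ) = ((2*α+(n:ℝ)+1 : ℝ):ℂ) := by
    push_cast; ring
  rw [hadd, Complex.Gamma_ofReal, Complex.Gamma_ofReal, Complex.Gamma_ofReal,
    ← Complex.ofReal_mul, ← Complex.ofReal_mul] at key
  have keyR : Real.Gamma (α+(n:ℝ)+1) * Real.Gamma α = Real.Gamma (2*α+(n:ℝ)+1) * B := by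
    exact_mod_cast key
  have hne : Real.Gamma (2*α+(n:ℝ)+1) ≠ 0 := by
    have : (0:ℝ) < 2*α+(n:ℝ)+1 := by positivity
    exact (Real.Gamma_pos_of_pos this).ne'
  field_simp [hne] at keyR ⊢
  linarith [keyR]

lemma Jval {α : ℝ} (hα : 0 < α) (n : ℕ) :
    (∫ x in (-1:ℝ)..1, (1-x)^(α-1) * (1+x)^(α+(n:ℝ)))
      = (2:ℝ)^(2*α+(n:ℝ)) *
          (Real.Gamma (α+(n:ℝ)+1) * Real.Gamma α / Real.Gamma (2*α+(n:ℝ)+1)) := by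
  have hsub := intervalIntegral.integral_comp_mul_add
    (a := (0:ℝ)) (b := 1) (f := fun x => (1-x)^(α-1) * (1+x)^(α+(n:ℝ)))
    (c := 2) two_ne_zero (-1)
  norm_num at hsub
  -- hsub : ∫ t in 0..1, (1 - (2*t - 1))^(α-1) * (1 + (2*t-1))^(α+n) = 2⁻¹ * ∫ x in -1..1, ...
  have hstep : (∫ t in (0:ℝ)..1, (1 - (2*t + -1))^(α-1) * (2*t)^(α+(n:ℝ)))
      = ((2:ℝ)^(α-1) * (2:ℝ)^(α+(n:ℝ))) * ∫ t in (0:ℝ)..1, t^(α+(n:ℝ)) * (1-t)^(α-1) := by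
    rw [← intervalIntegral.integral_const_mul]
    apply intCongrAe (by norm_num)
    intro t ht
    obtain ⟨ht0, ht1⟩ := ht
    have e1 : (1:ℝ) - (2*t + -1) = 2*(1-t) := by ring
    rw [e1, Real.mul_rpow (by norm_num) (by linarith), Real.mul_rpow (by norm_num) ht0.le]
    ring
  rw [Bval hα n] at hstep
  have h2 : ((2:ℝ))^(α-1) * (2:ℝ)^(α+(n:ℝ)) * 2 = (2:ℝ)^(2*α+(n:ℝ)) := by
    rw [← Real.rpow_add (by norm_num : (0:ℝ) < 2),
      ← Real.rpow_add_one (by norm_num : (2:ℝ) ≠ 0)]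
    congr 1
    ring
  set G : ℝ := Real.Gamma (α+(n:ℝ)+1) * Real.Gamma α / Real.Gamma (2*α+(n:ℝ)+1) with hG
  calc (∫ x in (-1:ℝ)..1, (1-x)^(α-1) * (1+x)^(α+(n:ℝ)))
      = 2 * ((2:ℝ)^(α-1) * (2:ℝ)^(α+(n:ℝ)) * G) := by
        rw [← hstep]
        linarith [hsub]
    _ = ((2:ℝ)^(α-1) * (2:ℝ)^(α+(n:ℝ)) * 2) * G := by ring
    _ = (2:ℝ)^(2*α+(n:ℝ)) * G := by rw [h2]

lemma pochProd (n : ℕ) (x : ℝ) :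
    (ascPochhammer ℝ n).eval x = ∏ i ∈ Finset.range n, (x + i) := by
  induction n with
  | zero => simp [ascPochhammer_zero]
  | succ n ih => rw [ascPochhammer_succ_eval, ih, Finset.prod_range_succ]

lemma pochPos {x : ℝ} (hx : 0 < x) (n : ℕ) : 0 < (ascPochhammer ℝ n).eval x := by
  rw [pochProd]
  apply Finset.prod_pos
  intro i _
  positivity

lemma pochGamma (n : ℕ) {x : ℝ} (hx : 0 < x) :
    Real.Gamma x * (ascPochhammer ℝ n).eval x = Real.Gamma (x + n) := by
  induction n with
  | zero => simp [ascPochhammer_zero]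
  | succ n ih =>
      rw [ascPochhammer_succ_eval, show x + ((n+1:ℕ):ℝ) = (x + (n:ℕ)) + 1 by push_cast; ring,
        Real.Gamma_add_one (by positivity)]
      push_cast
      rw [← ih]
      ring

lemma spanOrth {α : ℝ} (hα : 0 < α) (P : ℕ → Polynomial ℝ)
    (hdeg : ∀ k : ℕ, (P k).natDegree = k)
    (horth : ∀ j k : ℕ, j ≠ k →
      (∫ x in (-1 : ℝ)..1, (1 - x ^ 2) ^ α * (P j).eval x * (P k).eval x) = 0)
    (hP0 : P 0 = 1) (M : ℕ) :
    ∀ d, d < M → ∀ q : Polynomial ℝ, q.natDegree ≤ d →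
      (∫ x in (-1:ℝ)..1, (1 - x^2) ^ α * (q.eval x * (P M).eval x)) = 0 := by
  intro d
  induction d with
  | zero =>
      intro hdM q hq
      have hq' : q = C (q.coeff 0) := Polynomial.eq_C_of_natDegree_le_zero hq
      have : (fun x : ℝ => (1 - x^2) ^ α * (q.eval x * (P M).eval x))
          = fun x : ℝ => (q.coeff 0) * ((1 - x^2) ^ α * (P 0).eval x * (P M).eval x) := by
        funext x
        rw [hq', hP0]
        simp only [eval_C, eval_one, coeff_C_zero]
        ring
      rw [intervalIntegral.integral_congr (fun x _ => congrFun this x),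
        intervalIntegral.integral_const_mul, horth 0 M (by omega), mul_zero]
  | succ d ih =>
      intro hdM q hq
      by_cases hq0 : q = 0
      · simp [hq0]
      by_cases hjd : q.natDegree ≤ d
      · exact ih (by omega) q hjd
      have hj : q.natDegree = d + 1 := by omega
      have hPne : P (d+1) ≠ 0 := by
        intro h
        have := hdeg (d+1)
        rw [h] at this
        simp at this
      have hlcP : (P (d+1)).leadingCoeff ≠ 0 := leadingCoeff_ne_zero.mpr hPne
      set c : ℝ := q.leadingCoeff / (P (d+1)).leadingCoeff with hc
      have hcne : c ≠ 0 := by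
        apply div_ne_zero (leadingCoeff_ne_zero.mpr hq0) hlcP
      set r : Polynomial ℝ := q - C c * P (d+1) with hr
      have hdegCc : (C c * P (d+1)).degree = q.degree := by
        rw [Polynomial.degree_C_mul hcne, Polynomial.degree_eq_natDegree hPne,
          Polynomial.degree_eq_natDegree hq0, hdeg (d+1), hj]
      have hlceq : q.leadingCoeff = (C c * P (d+1)).leadingCoeff := by
        rw [Polynomial.leadingCoeff_mul, Polynomial.leadingCoeff_C, hc,
          div_mul_cancel₀ _ hlcP]
      have hdr : r.degree < q.degree := Polynomial.degree_sub_lt hdegCc.symm hq0 hlceq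
      have hrd : r.natDegree ≤ d := by
        by_cases hr0 : r = 0
        · simp [hr0]
        · have := (Polynomial.natDegree_lt_iff_degree_lt hr0).2
            (lt_of_lt_of_le hdr (by rw [Polynomial.degree_eq_natDegree hq0, hj]))
          omega
      have hsplit : (fun x : ℝ => (1 - x^2) ^ α * (q.eval x * (P M).eval x))
          = fun x : ℝ => c * ((1 - x^2) ^ α * (P (d+1)).eval x * (P M).eval x)
            + (1 - x^2) ^ α * (r.eval x * (P M).eval x) := by
        funext x
        have : q = C c * P (d+1) + r := by rw [hr]; ring
        rw [this]
        simp only [eval_add, eval_mul, eval_C]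
        ring
      rw [intervalIntegral.integral_congr (fun x _ => congrFun hsplit x)]
      have i1 : IntervalIntegrable
          (fun x : ℝ => c * ((1 - x^2) ^ α * (P (d+1)).eval x * (P M).eval x)) volume (-1) 1 := by
        have := (intW α hα.le (P (d+1) * P M)).const_mul c
        have heq : (fun x : ℝ => c * ((1 - x^2) ^ α * (P (d+1) * P M).eval x))
            = fun x : ℝ => c * ((1 - x^2) ^ α * (P (d+1)).eval x * (P M).eval x) := by
          funext x; simp only [eval_mul]; ring
        rwa [heq] at this
      have i2 : IntervalIntegrable
          (fun x : ℝ => (1 - x^2) ^ α * (r.eval x * (P M).eval x)) volume (-1) 1 := by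
        have := intW α hα.le (r * P M)
        have heq : (fun x : ℝ => (1 - x^2) ^ α * (r * P M).eval x)
            = fun x : ℝ => (1 - x^2) ^ α * (r.eval x * (P M).eval x) := by
          funext x; simp only [eval_mul]
        rwa [heq] at this
      rw [intervalIntegral.integral_add i1 i2, intervalIntegral.integral_const_mul,
        horth (d+1) M (by omega), ih (by omega) r hrd, mul_zero, add_zero]

theorem stmt14 (α : ℝ) (hα : 0 < α)
    (P : ℕ → Polynomial ℝ)
    (hdeg : ∀ k : ℕ, (P k).natDegree = k)
    (horth : ∀ j k : ℕ, j ≠ k →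
      (∫ x in (-1 : ℝ)..1, (1 - x ^ 2) ^ α * (P j).eval x * (P k).eval x) = 0)
    (hnorm : ∀ k : ℕ,
      (P k).eval 1 = (ascPochhammer ℝ k).eval (1 + α) / (Nat.factorial k : ℝ)) :
    ∀ m : ℕ,
      (∫ x in (-1 : ℝ)..1, (1 - x ^ 2) ^ (α - 1) * x * (P (2 * m + 1)).eval x) =
        Real.sqrt Real.pi * (ascPochhammer ℝ (m + 1)).eval ((m : ℝ) + 1 + α) *
          Real.Gamma α / (2 * 4 ^ m * Real.Gamma (α + m + 3 / 2)) := by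
  intro m
  set n : ℕ := 2 * m + 1 with hn
  have hodd : Odd n := ⟨m, by omega⟩
  -- P 0 = 1
  have hP0 : P 0 = 1 := by
    have h1 : P 0 = C ((P 0).coeff 0) :=
      Polynomial.eq_C_of_natDegree_le_zero (hdeg 0).le
    have h2 := hnorm 0
    rw [h1] at h2
    simp [ascPochhammer_zero] at h2
    rw [h1, h2]
    simp
  -- the Rodrigues polynomial
  set A : Polynomial ℝ := stmtA α n n with hA
  have hcoefA : A.coeff n = ∏ i ∈ Finset.range n, (-(2*(n:ℝ) + 2*α - i)) := stmtA_coeff α n n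
  have hcAne : A.coeff n ≠ 0 := by
    rw [hcoefA]
    apply Finset.prod_ne_zero_iff.2
    intro i hi
    have hi' : i < n := Finset.mem_range.1 hi
    have : (i:ℝ) < n := by exact_mod_cast hi'
    have : (0:ℝ) < 2*(n:ℝ) + 2*α - i := by linarith
    linarith
  have hAdegle : A.natDegree ≤ n := stmtA_natDegree_le α n n
  -- R = 0 argument
  set cP : ℝ := (P n).coeff n with hcP
  set R : Polynomial ℝ := C (A.coeff n) * P n - C cP * A with hR
  have hRdeg : R.natDegree ≤ 2*m := by
    apply Polynomial.natDegree_le_iff_coeff_eq_zero.2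
    intro N hN
    rw [hR, coeff_sub, coeff_C_mul, coeff_C_mul]
    rcases eq_or_lt_of_le (show n ≤ N by omega) with heq | hlt
    · rw [← heq]
      ring
    · rw [Polynomial.coeff_eq_zero_of_natDegree_lt (p := P n) (n := N)
          (by rw [hdeg n]; exact hlt),
        Polynomial.coeff_eq_zero_of_natDegree_lt (p := A) (n := N)
          (lt_of_le_of_lt hAdegle hlt)]
      ring
  have hRzero : R = 0 := by
    apply sqZero hα
    have hsplit : (fun x : ℝ => (1 - x^2) ^ α * (R.eval x * R.eval x))
        = fun x : ℝ => (A.coeff n) * ((1 - x^2) ^ α * (R.eval x * (P n).eval x))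
          - cP * ((1 - x^2) ^ α * (A.eval x * R.eval x)) := by
      funext x
      nth_rewrite 2 [hR]
      simp only [eval_sub, eval_mul, eval_C]
      ring
    rw [intervalIntegral.integral_congr (fun x _ => congrFun hsplit x)]
    have i1 : IntervalIntegrable
        (fun x : ℝ => (A.coeff n) * ((1 - x^2) ^ α * (R.eval x * (P n).eval x)))
        volume (-1) 1 := by
      have := (intW α hα.le (R * P n)).const_mul (A.coeff n)
      have heq : (fun x : ℝ => (A.coeff n) * ((1 - x^2) ^ α * (R * P n).eval x))
          = fun x : ℝ => (A.coeff n) * ((1 - x^2) ^ α * (R.eval x * (P n).eval x)) := by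
        funext x; simp only [eval_mul]
      rwa [heq] at this
    have i2 : IntervalIntegrable
        (fun x : ℝ => cP * ((1 - x^2) ^ α * (A.eval x * R.eval x))) volume (-1) 1 := by
      have := (intW α hα.le (A * R)).const_mul cP
      have heq : (fun x : ℝ => cP * ((1 - x^2) ^ α * (A * R).eval x))
          = fun x : ℝ => cP * ((1 - x^2) ^ α * (A.eval x * R.eval x)) := by
        funext x; simp only [eval_mul]
      rwa [heq] at this
    rw [intervalIntegral.integral_sub i1 i2, intervalIntegral.integral_const_mul,
      intervalIntegral.integral_const_mul,
      spanOrth hα P hdeg horth hP0 n (2*m) (by omega) R hRdeg,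
      orthA hα n R (by omega : R.natDegree < n)]
    ring
  have hPA : C (A.coeff n) * P n = C cP * A := by
    have := sub_eq_zero.1 hRzero
    exact this
  -- evaluate at 1
  have hAval : A.eval 1 = (-2:ℝ)^n * (ascPochhammer ℝ n).eval (α+1) := by
    rw [hA, stmtA_eval_one, pochProd]
    have h1 : ∀ i ∈ Finset.range n, (-2*((n:ℝ) + α - i)) = (-2) * ((n:ℝ) + α - i) := by
      intro i _; ring
    rw [Finset.prod_congr rfl h1, Finset.prod_mul_distrib, Finset.prod_const,
      Finset.card_range]
    congr 1
    rw [← Finset.prod_range_reflect]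
    apply Finset.prod_congr rfl
    intro j hj
    have hj' : j < n := Finset.mem_range.1 hj
    have hcast : ((n - 1 - j : ℕ):ℝ) = (n:ℝ) - 1 - j := by
      have h2 : n - 1 - j = n - (1 + j) := by omega
      rw [h2, Nat.cast_sub (by omega)]
      push_cast
      ring
    rw [hcast]
    ring
  have hpochn : (0:ℝ) < (ascPochhammer ℝ n).eval (α+1) := pochPos (by linarith) n
  have hAvalne : A.eval 1 ≠ 0 := by
    rw [hAval]
    positivity
  have hv : (P n).eval 1 = (ascPochhammer ℝ n).eval (α+1) / (Nat.factorial n : ℝ) := by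
    rw [hnorm n, add_comm 1 α]
  have hfacpos : (0:ℝ) < (Nat.factorial n : ℝ) := by
    exact_mod_cast Nat.factorial_pos n
  -- determine the ratio
  set b : ℝ := cP / (A.coeff n) with hb
  have hPnA : P n = C b * A := by
    have h1 : C ((A.coeff n)⁻¹) * (C (A.coeff n) * P n) = C ((A.coeff n)⁻¹) * (C cP * A) := by
      rw [hPA]
    rwa [← mul_assoc, ← mul_assoc, ← C_mul, ← C_mul, inv_mul_cancel₀ hcAne, C_1, one_mul,
      show (A.coeff n)⁻¹ * cP = b by rw [hb]; ring] at h1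
  have hbval : b = -1 / (2^n * (Nat.factorial n : ℝ)) := by
    have h1 : (P n).eval 1 = b * A.eval 1 := by
      rw [hPnA]; simp
    rw [hv, hAval] at h1
    have hsgn : (-2:ℝ)^n = -(2^n) := by
      rw [show (-2:ℝ) = (-1) * 2 by norm_num, mul_pow, Odd.neg_one_pow hodd]
      ring
    rw [hsgn] at h1
    have h2n : (0:ℝ) < 2^n := by positivity
    field_simp at h1 ⊢
    nlinarith [hpochn, h1]
  -- the integral computation
  have hcastn : ((n:ℕ):ℝ) = 2*(m:ℝ)+1 := by rw [hn]; push_cast; ring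
  set Jn : ℝ := ∫ x in (-1:ℝ)..1, (1-x)^(α-1) * (1+x)^(α+(n:ℝ)) with hJn
  have hO : (∫ x in (-1:ℝ)..1, (1 - x^2)^(α-1) * x * (P n).eval x)
      = b * ∫ x in (-1:ℝ)..1, (1 - x^2)^(α-1) * x * A.eval x := by
    rw [← intervalIntegral.integral_const_mul]
    apply intervalIntegral.integral_congr
    intro x _
    show (1 - x^2)^(α-1) * x * (P n).eval x = b * ((1 - x^2)^(α-1) * x * A.eval x)
    rw [hPnA]
    simp only [eval_mul, eval_C]
    ring
  have hchain := chainH' hα n n le_rfl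
  have hH0 : (∫ x in (-1:ℝ)..1, (1 - x^2)^(α-1) * x * A.eval x)
      = -((Nat.factorial n : ℝ) * Jn) := by
    rw [idH0 hα n]
    rw [Odd.neg_one_pow hodd] at hchain
    have h2 := idHn hα n hodd
    rw [hchain] at h2
    rw [hJn]
    linarith [h2]
  have hJval := Jval hα n
  rw [← hJn] at hJval
  -- gamma abbreviations
  have hg0 : (0:ℝ) < Real.Gamma α := Real.Gamma_pos_of_pos hα
  have hg1 : (0:ℝ) < Real.Gamma (α + (n:ℝ) + 1) := Real.Gamma_pos_of_pos (by positivity)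
  have hg4 : (0:ℝ) < Real.Gamma (2*α + (n:ℝ) + 1) := Real.Gamma_pos_of_pos (by positivity)
  have hg2 : (0:ℝ) < Real.Gamma (α + (m:ℝ) + 1) := Real.Gamma_pos_of_pos (by positivity)
  have hg3 : (0:ℝ) < Real.Gamma (α + (m:ℝ) + 3/2) := Real.Gamma_pos_of_pos (by positivity)
  have hsp : (0:ℝ) < Real.sqrt Real.pi := Real.sqrt_pos.2 Real.pi_pos
  have hdup := Real.Gamma_mul_Gamma_add_half (α + (m:ℝ) + 1)
  rw [show α + (m:ℝ) + 1 + 1/2 = α + (m:ℝ) + 3/2 by ring,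
    show 2*(α + (m:ℝ) + 1) = 2*α + (2*(m:ℝ)+1) + 1 by ring, ← hcastn] at hdup
  have hdup2 : Real.Gamma (α + (m:ℝ) + 1) * Real.Gamma (α + (m:ℝ) + 3/2)
      = 2^(1-2*(α+(m:ℝ)+1)) * Real.sqrt Real.pi * Real.Gamma (2*α + (n:ℝ) + 1) := by
    rw [show (1:ℝ)-(2*α+(n:ℝ)+1) = 1-2*(α+(m:ℝ)+1) by rw [hcastn]; ring] at hdup
    linear_combination hdup
  have hpoch : (ascPochhammer ℝ (m+1)).eval ((m:ℝ)+1+α)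
      = Real.Gamma (α + (n:ℝ) + 1) / Real.Gamma (α + (m:ℝ) + 1) := by
    have h := pochGamma (m+1) (x := (m:ℝ)+1+α) (by positivity)
    rw [show (m:ℝ)+1+α+((m+1:ℕ):ℝ) = α + (2*(m:ℝ)+1) + 1 by push_cast; ring, ← hcastn,
      show Real.Gamma ((m:ℝ)+1+α) = Real.Gamma (α + (m:ℝ) + 1) by
        congr 1; ring] at h
    rw [eq_div_iff hg2.ne']
    linarith [h]
  have hpow : (2:ℝ)^(2*α+(n:ℝ)) * 2 * 4^m * 2^(1-2*(α+(m:ℝ)+1)) = 2^n := by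
    have h4 : (4:ℝ)^m = 2^(((2*m:ℕ)):ℝ) := by
      rw [Real.rpow_natCast, pow_mul]
      norm_num
    have h2n : (2:ℝ)^n = 2^(((n:ℕ)):ℝ) := (Real.rpow_natCast 2 n).symm
    rw [h4, h2n, ← Real.rpow_add_one (by norm_num : (2:ℝ) ≠ 0),
      ← Real.rpow_add (by norm_num : (0:ℝ) < 2), ← Real.rpow_add (by norm_num : (0:ℝ) < 2)]
    congr 1
    rw [hcastn]
    push_cast
    ring
  -- put it together
  rw [hO, hH0, hbval, hJval, hpoch]
  have hD : (Real.Gamma (2*α + (n:ℝ) + 1) * 2^n * Real.Gamma (α + (m:ℝ) + 1) *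
      (2*(4:ℝ)^m * Real.Gamma (α + (m:ℝ) + 3/2))) ≠ 0 := by positivity
  apply mul_right_cancel₀ hD
  have hfac : ((Nat.factorial n : ℝ)) ≠ 0 := hfacpos.ne'
  have h2npos : (0:ℝ) < 2^n := by positivity
  calc (-1 / (2 ^ n * (Nat.factorial n : ℝ)) *
        -((Nat.factorial n : ℝ) * ((2:ℝ)^(2*α+(n:ℝ)) *
          (Real.Gamma (α + (n:ℝ) + 1) * Real.Gamma α / Real.Gamma (2*α + (n:ℝ) + 1))))) *
      (Real.Gamma (2*α + (n:ℝ) + 1) * 2^n * Real.Gamma (α + (m:ℝ) + 1) *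
        (2*(4:ℝ)^m * Real.Gamma (α + (m:ℝ) + 3/2)))
      = ((2:ℝ)^(2*α+(n:ℝ)) * 2 * 4^m) * Real.Gamma (α + (n:ℝ) + 1) * Real.Gamma α *
          (Real.Gamma (α + (m:ℝ) + 1) * Real.Gamma (α + (m:ℝ) + 3/2)) := by
        field_simp
    _ = ((2:ℝ)^(2*α+(n:ℝ)) * 2 * 4^m) * Real.Gamma (α + (n:ℝ) + 1) * Real.Gamma α *
          (2^(1-2*(α+(m:ℝ)+1)) * Real.sqrt Real.pi * Real.Gamma (2*α + (n:ℝ) + 1)) := by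
        rw [hdup2]
    _ = ((2:ℝ)^(2*α+(n:ℝ)) * 2 * 4^m * 2^(1-2*(α+(m:ℝ)+1))) *
          (Real.Gamma (α + (n:ℝ) + 1) * Real.Gamma α * Real.sqrt Real.pi *
            Real.Gamma (2*α + (n:ℝ) + 1)) := by ring
    _ = (2:ℝ)^n * (Real.Gamma (α + (n:ℝ) + 1) * Real.Gamma α * Real.sqrt Real.pi *
            Real.Gamma (2*α + (n:ℝ) + 1)) := by rw [hpow]
    _ = (Real.sqrt Real.pi *
          (Real.Gamma (α + (n:ℝ) + 1) / Real.Gamma (α + (m:ℝ) + 1)) * Real.Gamma α /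
            (2 * 4 ^ m * Real.Gamma (α + (m:ℝ) + 3/2))) *
        (Real.Gamma (2*α + (n:ℝ) + 1) * 2^n * Real.Gamma (α + (m:ℝ) + 1) *
          (2*(4:ℝ)^m * Real.Gamma (α + (m:ℝ) + 3/2))) := by
        field_simp
end

section
/- For |s|, |t| < 1 and α > 0, the double power series expansion 1/((1−s)(1−t)(1−st)^α) = ∑_{m≥0} ∑_{n≥0} ( (1+α)_{min(m,n)} / min(m,n)! ) s^m t^n holds. -/
open Real Filter Set

noncomputable def pc (β : ℝ) (k : ℕ) : ℝ :=
  (ascPochhammer ℝ k).eval β / (Nat.factorial k : ℝ)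

lemma pc_zero (β : ℝ) : pc β 0 = 1 := by simp [pc]

lemma pc_succ (β : ℝ) (k : ℕ) : pc β (k+1) = pc β k * ((β + k) / (k+1)) := by
  simp only [pc, ascPochhammer_succ_right, Nat.factorial_succ]
  push_cast
  rw [Polynomial.eval_mul, Polynomial.eval_add, Polynomial.eval_X, Polynomial.eval_natCast]
  rw [div_mul_div_comm]
  congr 1 <;> ring

lemma pc_pos {β : ℝ} (hβ : 0 < β) (k : ℕ) : 0 < pc β k := by
  induction k with
  | zero => simp [pc_zero]
  | succ k ih =>
    rw [pc_succ]
    have : (0:ℝ) < β + k := by positivity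
    positivity

lemma pc_one_le {β : ℝ} (hβ : 1 ≤ β) (k : ℕ) : 1 ≤ pc β k := by
  induction k with
  | zero => simp [pc_zero]
  | succ k ih =>
    rw [pc_succ]
    have h1 : (1:ℝ) ≤ (β + k) / (k+1) := by
      rw [le_div_iff₀ (by positivity)]
      linarith
    nlinarith

lemma tendsto_aux (a b : ℝ) (hb : 0 < b) :
    Tendsto (fun k : ℕ => (a + k) / (b + k)) atTop (nhds 1) := by
  have h : (fun k : ℕ => (a + k) / (b + k)) = fun k : ℕ => 1 + (a - b) / (b + k) := by
    funext k
    have : b + (k:ℝ) ≠ 0 := by positivity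
    field_simp
    ring
  rw [h]
  have l1 : Tendsto (fun k : ℕ => (a - b) / (b + k)) atTop (nhds 0) := by
    apply Tendsto.div_atTop tendsto_const_nhds
    exact tendsto_atTop_add_const_left _ _ tendsto_natCast_atTop_atTop
  simpa using (tendsto_const_nhds (x := (1:ℝ))).add l1

lemma summable_ratio_lim {f : ℕ → ℝ} (hf : ∀ k, 0 < f k)
    (h : Tendsto (fun k => f (k + 1) / f k) atTop (nhds 1)) {x : ℝ} (hx : |x| < 1) :
    Summable (fun k => f k * x ^ k) := by
  rcases eq_or_ne x 0 with rfl | hx0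
  · apply summable_of_ne_finset_zero (s := {0})
    intro k hk
    simp [zero_pow (by simpa using hk)]
  · apply summable_of_ratio_test_tendsto_lt_one hx
    · filter_upwards with k
      have := hf k
      positivity
    · have e : (fun k : ℕ => ‖f (k+1) * x ^ (k+1)‖ / ‖f k * x ^ k‖)
          = fun k : ℕ => (f (k+1) / f k) * |x| := by
        funext k
        rw [norm_mul, norm_mul, norm_pow, norm_pow, pow_succ]
        rw [Real.norm_eq_abs (f (k+1)), Real.norm_eq_abs (f k)]
        rw [abs_of_pos (hf (k+1)), abs_of_pos (hf k)]
        simp only [Real.norm_eq_abs]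
        have h3 : |x| ^ k ≠ 0 := pow_ne_zero _ (by simpa using hx0)
        have h4 := (hf k).ne'
        field_simp
      rw [e]
      simpa using h.mul_const |x|

lemma pc_summable {β : ℝ} (hβ : 0 < β) {x : ℝ} (hx : |x| < 1) :
    Summable (fun k => pc β k * x ^ k) := by
  apply summable_ratio_lim (pc_pos hβ) ?_ hx
  have e : (fun k : ℕ => pc β (k+1) / pc β k) = fun k : ℕ => (β + k) / (1 + k) := by
    funext k
    rw [pc_succ]
    have := (pc_pos hβ k).ne'
    field_simp
    ring
  rw [e]
  exact tendsto_aux β 1 one_pos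

lemma pc_deriv_summable {β : ℝ} (hβ : 0 < β) {x : ℝ} (hx : |x| < 1) :
    Summable (fun k : ℕ => pc β k * (β + k) * x ^ k) := by
  apply summable_ratio_lim (fun k => by have := pc_pos hβ k; positivity) ?_ hx
  have e : (fun k : ℕ => pc β (k+1) * (β + ((k:ℕ)+1 : ℕ)) / (pc β k * (β + k)))
      = fun k : ℕ => ((β + k) / (1 + k)) * ((β + 1 + k) / (β + k)) := by
    funext k
    rw [pc_succ]
    have h1 := (pc_pos hβ k).ne'
    have h2 : β + (k:ℝ) ≠ 0 := by positivity
    have h3 : (1:ℝ) + k ≠ 0 := by positivity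
    push_cast
    field_simp
    ring
  rw [e]
  have := (tendsto_aux β 1 one_pos).mul (tendsto_aux (β+1) β hβ)
  simpa using this

lemma pc_hasDerivAt {β : ℝ} (hβ : 0 < β) {x : ℝ} (hx : |x| < 1) :
    HasDerivAt (fun y => ∑' k, pc β k * y ^ k)
      (∑' k : ℕ, pc β k * ((k : ℝ) * x ^ (k - 1))) x := by
  set r : ℝ := (|x| + 1) / 2 with hr
  have hxr : |x| < r := by rw [hr]; linarith
  have hr0 : 0 < r := lt_of_le_of_lt (abs_nonneg x) hxr
  have hr1 : r < 1 := by rw [hr]; linarith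
  have hrabs : |r| < 1 := by rwa [abs_of_pos hr0]
  set u : ℕ → ℝ := fun k => Nat.rec 0 (fun j _ => pc β j * (β + j) * r ^ j) k with hu
  have hu0 : u 0 = 0 := rfl
  have huS : ∀ j : ℕ, u (j + 1) = pc β j * (β + j) * r ^ j := fun j => rfl
  have hus : Summable u := by
    rw [← summable_nat_add_iff 1]
    simp only [huS]
    exact pc_deriv_summable hβ hrabs
  have key : ∀ (k : ℕ) (y : ℝ), y ∈ Ioo (-r) r →
      ‖pc β k * ((k : ℝ) * y ^ (k - 1))‖ ≤ u k := by
    intro k y hy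
    have hyr : |y| ≤ r := le_of_lt (abs_lt.mpr ⟨hy.1, hy.2⟩)
    cases k with
    | zero => simp [hu0]
    | succ j =>
      rw [huS]
      have h1 : pc β (j+1) * ((j+1 : ℕ) : ℝ) = pc β j * (β + j) := by
        rw [pc_succ]
        have : ((j:ℝ) + 1) ≠ 0 := by positivity
        push_cast
        field_simp
      have h2 : ‖pc β (j+1) * (((j+1:ℕ) : ℝ) * y ^ (j + 1 - 1))‖
          = pc β j * (β + j) * |y| ^ j := by
        rw [norm_mul, norm_mul, Real.norm_eq_abs, Real.norm_eq_abs, norm_pow,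
          Real.norm_eq_abs]
        have := pc_pos hβ (j+1)
        rw [abs_of_pos this, abs_of_nonneg (by positivity : (0:ℝ) ≤ ((j+1:ℕ):ℝ))]
        rw [← mul_assoc, h1]
        norm_num
      rw [h2]
      have h3 : |y| ^ j ≤ r ^ j := pow_le_pow_left₀ (abs_nonneg y) hyr j
      have h4 : 0 ≤ pc β j * (β + j) := by
        have := pc_pos hβ j
        positivity
      exact mul_le_mul_of_nonneg_left h3 h4
  exact hasDerivAt_tsum_of_isPreconnected hus isOpen_Ioo (convex_Ioo _ _).isPreconnected
    (fun k y _ => (hasDerivAt_pow k y).const_mul (pc β k)) key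
    ⟨by linarith, hr0⟩
    (by simpa using pc_summable hβ (by simpa using (zero_lt_one (α := ℝ))))
    ⟨neg_lt_of_abs_lt hxr, lt_of_abs_lt hxr⟩

lemma pc_deriv_eq {β : ℝ} (hβ : 0 < β) {x : ℝ} (hx : |x| < 1) :
    (1 - x) * (∑' k : ℕ, pc β k * ((k : ℝ) * x ^ (k - 1)))
      = β * ∑' k, pc β k * x ^ k := by
  have h1 : ∀ j : ℕ, pc β (j+1) * ((j+1 : ℕ) : ℝ) = pc β j * (β + j) := by
    intro j
    rw [pc_succ]
    have : ((j:ℝ) + 1) ≠ 0 := by positivity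
    push_cast
    field_simp
  have hsum1 : Summable (fun k : ℕ => pc β k * (β + k) * x ^ k) := pc_deriv_summable hβ hx
  have hsum0 : Summable (fun k : ℕ => pc β k * x ^ k) := pc_summable hβ hx
  have hsumk : Summable (fun k : ℕ => pc β k * (k : ℝ) * x ^ k) := by
    have : (fun k : ℕ => pc β k * (k : ℝ) * x ^ k)
        = fun k : ℕ => pc β k * (β + k) * x ^ k - β * (pc β k * x ^ k) := by
      funext k; ring
    rw [this]
    exact hsum1.sub (hsum0.mul_left β)
  have hsumd : Summable (fun k : ℕ => pc β k * ((k : ℝ) * x ^ (k - 1))) := by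
    rw [← summable_nat_add_iff 1]
    have : (fun k : ℕ => pc β (k+1) * (((k+1:ℕ) : ℝ) * x ^ (k + 1 - 1)))
        = fun k : ℕ => pc β k * (β + k) * x ^ k := by
      funext k
      rw [← mul_assoc, h1]
      norm_num
    rw [this]
    exact hsum1
  have hD : (∑' k : ℕ, pc β k * ((k : ℝ) * x ^ (k - 1)))
      = ∑' k : ℕ, pc β k * (β + k) * x ^ k := by
    have e : ∀ k : ℕ, pc β (k+1) * (((k+1:ℕ) : ℝ) * x ^ (k + 1 - 1))
        = pc β k * (β + k) * x ^ k := by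
      intro k
      rw [← mul_assoc, h1]
      norm_num
    rw [Summable.tsum_eq_zero_add hsumd, tsum_congr e]
    simp
  have hxD : x * (∑' k : ℕ, pc β k * ((k : ℝ) * x ^ (k - 1)))
      = ∑' k : ℕ, pc β k * (k : ℝ) * x ^ k := by
    rw [← tsum_mul_left]
    apply tsum_congr
    intro k
    cases k with
    | zero => simp
    | succ j =>
      rw [Nat.add_sub_cancel]
      push_cast
      ring
  rw [sub_mul, one_mul, hxD, hD, ← Summable.tsum_sub hsum1 hsumk, ← tsum_mul_left]
  apply tsum_congr
  intro k
  ring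

lemma pc_tsum_eq {β : ℝ} (hβ : 0 < β) {x : ℝ} (hx : |x| < 1) :
    ∑' k, pc β k * x ^ k = (1 - x) ^ (-β) := by
  set F : ℝ → ℝ := fun y => ∑' k, pc β k * y ^ k with hF
  set g : ℝ → ℝ := fun y => (1 - y) ^ β * F y with hg
  have hderiv : ∀ y ∈ Ioo (-1 : ℝ) 1, HasDerivAt g 0 y := by
    intro y hy
    have hy1 : |y| < 1 := abs_lt.mpr ⟨hy.1, hy.2⟩
    have hy2 : (0:ℝ) < 1 - y := by linarith [hy.2]
    have hFd := pc_hasDerivAt hβ hy1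
    have hud : HasDerivAt (fun z : ℝ => 1 - z) (-1) y := by
      simpa using (hasDerivAt_id y).const_sub 1
    have h1 : HasDerivAt (fun z : ℝ => (1 - z) ^ β)
        (-1 * β * (1 - y) ^ (β - 1)) y :=
      hud.rpow_const (Or.inl hy2.ne')
    have := h1.mul hFd
    refine HasDerivAt.congr_deriv this ?_
    have hsplit : (1 - y) ^ β = (1 - y) ^ (β - 1) * (1 - y) := by
      rw [← Real.rpow_add_one hy2.ne' (β - 1)]
      norm_num
    have hkey := pc_deriv_eq hβ hy1
    rw [hsplit]
    have : -1 * β * (1 - y) ^ (β - 1) * F y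
        + (1 - y) ^ (β - 1) * (1 - y) * (∑' k : ℕ, pc β k * ((k : ℝ) * y ^ (k - 1)))
        = (1 - y) ^ (β - 1) *
          ((1 - y) * (∑' k : ℕ, pc β k * ((k : ℝ) * y ^ (k - 1))) - β * F y) := by
      ring
    rw [this, hkey]
    simp [F]
  have hmem : x ∈ Ioo (-1 : ℝ) 1 := abs_lt.mp hx
  have h0mem : (0:ℝ) ∈ Ioo (-1 : ℝ) 1 := by norm_num
  have hgconst : g x = g 0 := by
    rcases le_total 0 x with h0x | hx0
    · have hsub : Icc (0:ℝ) x ⊆ Ioo (-1 : ℝ) 1 := fun y hy =>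
        ⟨by linarith [hy.1], lt_of_le_of_lt hy.2 hmem.2⟩
      have := constant_of_has_deriv_right_zero
        (fun y hy => ((hderiv y (hsub hy)).continuousAt).continuousWithinAt)
        (fun y hy => (hderiv y (hsub (Ico_subset_Icc_self hy))).hasDerivWithinAt)
        x (right_mem_Icc.mpr h0x)
      exact this
    · have hsub : Icc x (0:ℝ) ⊆ Ioo (-1 : ℝ) 1 := fun y hy =>
        ⟨lt_of_lt_of_le hmem.1 hy.1, by linarith [hy.2]⟩
      have := constant_of_has_deriv_right_zero
        (fun y hy => ((hderiv y (hsub hy)).continuousAt).continuousWithinAt)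
        (fun y hy => (hderiv y (hsub (Ico_subset_Icc_self hy))).hasDerivWithinAt)
        0 (right_mem_Icc.mpr hx0)
      exact this.symm
  have hF0 : F 0 = 1 := by
    show (∑' k, pc β k * (0:ℝ) ^ k) = 1
    rw [tsum_eq_single 0 (fun k hk => by simp [zero_pow hk])]
    simp [pc_zero]
  have hg0 : g 0 = 1 := by
    rw [hg]
    simp only
    rw [hF0, sub_zero, Real.one_rpow, mul_one]
  have hx2 : (0:ℝ) < 1 - x := by linarith [hmem.2]
  have hpow : (0:ℝ) < (1 - x) ^ β := Real.rpow_pos_of_pos hx2 β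
  have h5 : (1 - x) ^ β * F x = 1 := by
    have := hgconst.trans hg0
    simpa [hg] using this
  rw [Real.rpow_neg hx2.le]
  field_simp at h5 ⊢
  linarith [h5]

lemma pc_mono {β : ℝ} (hβ : 1 ≤ β) : Monotone (pc β) := by
  apply monotone_nat_of_le_succ
  intro k
  rw [pc_succ]
  have h1 : (1:ℝ) ≤ (β + k) / (k+1) := by
    rw [le_div_iff₀ (by positivity)]; linarith
  nlinarith [pc_pos (by linarith : (0:ℝ) < β) k]

lemma geo_tail {x : ℝ} (hx : |x| < 1) (m : ℕ) :
    ∑' n : ℕ, (if m < n then x ^ n else 0) = x ^ (m+1) * (1 - x)⁻¹ := by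
  have hsumm : Summable (fun n : ℕ => if m < n then x ^ n else 0) := by
    apply Summable.of_norm_bounded (g := fun n => |x| ^ n)
      (summable_geometric_of_lt_one (abs_nonneg x) hx)
    intro n
    split
    · rw [Real.norm_eq_abs, abs_pow]
    · simp only [norm_zero]
      positivity
  rw [← Summable.sum_add_tsum_nat_add (m+1) hsumm]
  have h0 : ∑ i ∈ Finset.range (m+1), (if m < i then x ^ i else 0) = 0 := by
    apply Finset.sum_eq_zero
    intro i hi
    rw [if_neg]
    exact fun h => absurd (Finset.mem_range.mp hi) (by omega)
  rw [h0, zero_add]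
  have h1 : ∀ j : ℕ, (if m < j + (m+1) then x ^ (j + (m+1)) else 0)
      = x ^ (m+1) * x ^ j := by
    intro j
    rw [if_pos (by omega), pow_add]
    ring
  rw [tsum_congr h1, tsum_mul_left, tsum_geometric_of_norm_lt_one (by rwa [Real.norm_eq_abs])]

set_option maxHeartbeats 2000000 in
theorem stmt16 (α s t : ℝ) (hα : 0 < α) (hs : |s| < 1) (ht : |t| < 1) :
    1 / ((1 - s) * (1 - t) * (1 - s * t) ^ α) =
      ∑' m : ℕ, ∑' n : ℕ,
        ((ascPochhammer ℝ (min m n)).eval (1 + α) / (Nat.factorial (min m n) : ℝ)) *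
          s ^ m * t ^ n := by
  set β : ℝ := 1 + α with hβdef
  have hβ1 : (1:ℝ) ≤ β := by rw [hβdef]; linarith
  have hβ0 : (0:ℝ) < β := by linarith
  have hst : |s * t| < 1 := by
    rw [abs_mul]
    calc |s| * |t| ≤ |s| * 1 := mul_le_mul_of_nonneg_left ht.le (abs_nonneg s)
    _ = |s| := mul_one _
    _ < 1 := hs
  have hs1 : (0:ℝ) < 1 - s := by have := (abs_lt.mp hs).2; linarith
  have ht1 : (0:ℝ) < 1 - t := by have := (abs_lt.mp ht).2; linarith
  have hst1 : (0:ℝ) < 1 - s * t := by have := (abs_lt.mp hst).2; linarith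
  set G : ℕ × ℕ → ℝ := fun p => (pc β p.1 * |s| ^ p.1) * (pc β p.2 * |t| ^ p.2) with hG
  have hGs : Summable G :=
    Summable.mul_of_nonneg (pc_summable hβ0 (by rwa [abs_abs]))
      (pc_summable hβ0 (by rwa [abs_abs]))
      (fun m => by have := pc_pos hβ0 m; positivity)
      (fun n => by have := pc_pos hβ0 n; positivity)
  have hGnn : ∀ p : ℕ × ℕ, 0 ≤ G p := by
    intro p
    have h1 := pc_pos hβ0 p.1
    have h2 := pc_pos hβ0 p.2
    positivity
  set F : ℕ × ℕ → ℝ := fun p => pc β (min p.1 p.2) * s ^ p.1 * t ^ p.2 with hF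
  have hFnorm : ∀ p : ℕ × ℕ, ‖F p‖ ≤ G p := by
    rintro ⟨m, n⟩
    have h1 : pc β (min m n) ≤ pc β m := pc_mono hβ1 (min_le_left m n)
    have h2 : (1:ℝ) ≤ pc β n := pc_one_le hβ1 n
    have h3 : pc β (min m n) ≤ pc β m * pc β n :=
      h1.trans (le_mul_of_one_le_right (pc_pos hβ0 m).le h2)
    have hnorm : ‖F (m, n)‖ = pc β (min m n) * |s| ^ m * |t| ^ n := by
      rw [hF]
      simp only
      rw [Real.norm_eq_abs, abs_mul, abs_mul, abs_pow, abs_pow,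
        abs_of_pos (pc_pos hβ0 (min m n))]
    rw [hnorm]
    calc pc β (min m n) * |s| ^ m * |t| ^ n
        ≤ (pc β m * pc β n) * |s| ^ m * |t| ^ n := by gcongr <;> positivity
      _ = (pc β m * |s| ^ m) * (pc β n * |t| ^ n) := by ring
  have hFs : Summable F := Summable.of_norm_bounded (g := G) hGs hFnorm
  set F1 : ℕ × ℕ → ℝ :=
    fun p => if p.1 < p.2 then pc β p.1 * s ^ p.1 * t ^ p.2 else 0 with hF1
  set F2 : ℕ × ℕ → ℝ :=
    fun p => if p.2 < p.1 then pc β p.2 * s ^ p.1 * t ^ p.2 else 0 with hF2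
  set F3 : ℕ × ℕ → ℝ :=
    fun p => if p.1 = p.2 then pc β p.1 * s ^ p.1 * t ^ p.2 else 0 with hF3
  have hsplit : ∀ p : ℕ × ℕ, F p = F1 p + F2 p + F3 p := by
    rintro ⟨m, n⟩
    simp only [hF, hF1, hF2, hF3]
    rcases lt_trichotomy m n with h | h | h
    · rw [if_pos h, if_neg (by omega), if_neg (by omega), min_eq_left h.le]; ring
    · rw [if_neg (by omega), if_neg (by omega), if_pos h, h, min_self]; ring
    · rw [if_neg (by omega), if_pos h, if_neg (by omega), min_eq_right h.le]; ring
  have habs : ∀ Fi : ℕ × ℕ → ℝ, (∀ p, Fi p = F p ∨ Fi p = 0) → Summable Fi := by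
    intro Fi hFi
    apply Summable.of_norm_bounded (g := G) hGs
    intro p
    rcases hFi p with h | h
    · rw [h]; exact hFnorm p
    · rw [h]; simpa using hGnn p
  have hF1s : Summable F1 := by
    apply habs
    rintro ⟨m, n⟩
    by_cases h : m < n
    · left
      simp only [hF1, hF, if_pos h, min_eq_left h.le]
    · right
      simp only [hF1, if_neg h]
  have hF2s : Summable F2 := by
    apply habs
    rintro ⟨m, n⟩
    by_cases h : n < m
    · left
      simp only [hF2, hF, if_pos h, min_eq_right h.le]
    · right
      simp only [hF2, if_neg h]
  have hF3s : Summable F3 := by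
    apply habs
    rintro ⟨m, n⟩
    by_cases h : m = n
    · left
      subst h
      simp [hF3, hF]
    · right
      simp only [hF3, if_neg h]
  set B : ℝ := ∑' k : ℕ, pc β k * (s * t) ^ k with hBdef
  have hB : B = (1 - s * t) ^ (-β) := pc_tsum_eq hβ0 hst
  -- value of F1 sum
  have hS1 : ∑' p : ℕ × ℕ, F1 p = t * (1 - t)⁻¹ * B := by
    rw [Summable.tsum_prod' hF1s (fun m => hF1s.prod_factor m)]
    have hinner : ∀ m : ℕ, ∑' n : ℕ, F1 (m, n)
        = pc β m * s ^ m * (t ^ (m+1) * (1 - t)⁻¹) := by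
      intro m
      have e : ∀ n : ℕ, F1 (m, n) = pc β m * s ^ m * (if m < n then t ^ n else 0) := by
        intro n
        simp only [hF1]
        split <;> ring
      rw [tsum_congr e, tsum_mul_left, geo_tail ht m]
    rw [tsum_congr hinner]
    have e2 : ∀ m : ℕ, pc β m * s ^ m * (t ^ (m+1) * (1 - t)⁻¹)
        = (t * (1 - t)⁻¹) * (pc β m * (s * t) ^ m) := by
      intro m
      rw [mul_pow, pow_succ]
      ring
    rw [tsum_congr e2, tsum_mul_left, ← hBdef]
  have hS2 : ∑' p : ℕ × ℕ, F2 p = s * (1 - s)⁻¹ * B := by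
    rw [← (Equiv.prodComm ℕ ℕ).tsum_eq F2]
    have hHs : Summable (fun q : ℕ × ℕ => F2 ((Equiv.prodComm ℕ ℕ) q)) :=
      (Equiv.prodComm ℕ ℕ).summable_iff.mpr hF2s
    rw [Summable.tsum_prod' hHs (fun n => hHs.prod_factor n)]
    have hinner : ∀ n : ℕ, ∑' m : ℕ, F2 ((Equiv.prodComm ℕ ℕ) (n, m))
        = pc β n * t ^ n * (s ^ (n+1) * (1 - s)⁻¹) := by
      intro n
      have e : ∀ m : ℕ, F2 ((Equiv.prodComm ℕ ℕ) (n, m))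
          = pc β n * t ^ n * (if n < m then s ^ m else 0) := by
        intro m
        simp only [hF2, Equiv.prodComm_apply, Prod.swap_prod_mk]
        split <;> ring
      rw [tsum_congr e, tsum_mul_left, geo_tail hs n]
    rw [tsum_congr hinner]
    have e2 : ∀ n : ℕ, pc β n * t ^ n * (s ^ (n+1) * (1 - s)⁻¹)
        = (s * (1 - s)⁻¹) * (pc β n * (s * t) ^ n) := by
      intro n
      rw [mul_pow, pow_succ]
      ring
    rw [tsum_congr e2, tsum_mul_left, ← hBdef]
  have hS3 : ∑' p : ℕ × ℕ, F3 p = B := by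
    rw [Summable.tsum_prod' hF3s (fun m => hF3s.prod_factor m)]
    have hinner : ∀ m : ℕ, ∑' n : ℕ, F3 (m, n) = pc β m * (s * t) ^ m := by
      intro m
      rw [tsum_eq_single m (fun n hn => by simp only [hF3]; rw [if_neg (fun h => hn h.symm)])]
      simp only [hF3, if_pos rfl, mul_pow]
      ring
    rw [tsum_congr hinner]
  have htot : ∑' p : ℕ × ℕ, F p = t * (1 - t)⁻¹ * B + s * (1 - s)⁻¹ * B + B := by
    rw [tsum_congr hsplit, Summable.tsum_add (hF1s.add hF2s) hF3s, Summable.tsum_add hF1s hF2s, hS1, hS2, hS3]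
  have hiter : (∑' m : ℕ, ∑' n : ℕ,
      ((ascPochhammer ℝ (min m n)).eval β / (Nat.factorial (min m n) : ℝ)) * s ^ m * t ^ n)
      = ∑' p : ℕ × ℕ, F p :=
    (Summable.tsum_prod' hFs (fun m => hFs.prod_factor m)).symm
  rw [hiter, htot, hB]
  have hrw : (1 - s * t) ^ (-β) = ((1 - s * t) * (1 - s * t) ^ α)⁻¹ := by
    rw [Real.rpow_neg hst1.le, hβdef, Real.rpow_add hst1, Real.rpow_one]
  rw [hrw]
  have hA : (0:ℝ) < (1 - s * t) ^ α := Real.rpow_pos_of_pos hst1 α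
  field_simp
  ring
end
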